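/- A subset K of a Banach space X is relatively compact if and only if there exists a null sequence (x_n) in X such that K is contained in the closed absolutely convex hull of {x_n : n ∈ ℕ}, i.e., K ⊂ { Σ_n a_n x_n : Σ_n |a_n| ≤ 1 }. -/

import Mathlib

open Filter Topology Pointwise

noncomputable section

variable {X : Type*} [NormedAddCommGroup X] [NormedSpace ℝ X]

/-- The `(p,r)`-convex hull of a sequence `z`: all sums `∑ aₖ • zₖ` with `(aₖ)` in the
closed unit ball of `ℓ_r`. -/
def prConv (r : ℝ) (z : ℕ → X) : Set X :=
  {x | ∃ a : ℕ → ℝ, Summable (fun k => |a k| ^ r) ∧ (∑' k, |a k| ^ r) ≤ 1 ∧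
    HasSum (fun k => a k • z k) x}

/-- `z` is absolutely `p`-summable. -/
def MemLpSeq (p : ℝ) (z : ℕ → X) : Prop := Summable fun k => ‖z k‖ ^ p

/-- The `ℓ_p(X)` norm of a sequence. -/
def lpNorm (p : ℝ) (z : ℕ → X) : ℝ := (∑' k, ‖z k‖ ^ p) ^ (1 / p)

/-- `x` is a `(p,r)`-null sequence. -/
def IsPRNull (p r : ℝ) (x : ℕ → X) : Prop :=
  ∀ ε > 0, ∃ z : ℕ → X, MemLpSeq p z ∧ lpNorm p z ≤ ε ∧
    ∃ N : ℕ, ∀ n ≥ N, x n ∈ prConv r z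

/-- `z` is weakly `p`-summable with weak `ℓ_p` norm at most `C`. -/
def WeakLpBound (p : ℝ) (z : ℕ → X) (C : ℝ) : Prop :=
  ∀ f : X →L[ℝ] ℝ, ‖f‖ ≤ 1 →
    Summable (fun k => |f (z k)| ^ p) ∧ (∑' k, |f (z k)| ^ p) ≤ C ^ p

/-- `z` is weakly `p`-summable. -/
def MemWeakLpSeq (p : ℝ) (z : ℕ → X) : Prop := ∃ C, 0 ≤ C ∧ WeakLpBound p z C

/-- `z` is unconditionally `p`-summable: weakly `p`-summable with tails tending to `0`
in the weak `ℓ_p` norm. -/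
def MemUncondLpSeq (p : ℝ) (z : ℕ → X) : Prop :=
  MemWeakLpSeq p z ∧ ∀ ε > 0, ∃ N : ℕ, WeakLpBound p (fun k => z (k + N)) ε

section GrothAux

open scoped Classical

set_option maxHeartbeats 1000000

lemma my_exists_net {C : Set X} (hC : IsCompact C) (hne : C.Nonempty) {ε : ℝ} (hε : 0 < ε) :
    ∃ (A : Finset X) (f : X → X), (∀ a ∈ A, a ∈ C) ∧
      ∀ x ∈ C, f x ∈ A ∧ ‖x - f x‖ ≤ ε := by
  obtain ⟨t, htC, htfin, hcover⟩ :=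
    hC.elim_finite_subcover_image (fun x (_ : x ∈ C) => Metric.isOpen_ball (x := x) (ε := ε))
      (fun x hx => Set.mem_biUnion hx (Metric.mem_ball_self hε))
  refine ⟨htfin.toFinset, fun x => if h : ∃ a ∈ t, x ∈ Metric.ball a ε then h.choose else 0,
    fun a ha => htC (htfin.mem_toFinset.1 ha), fun x hx => ?_⟩
  have hx' : ∃ a ∈ t, x ∈ Metric.ball a ε := by
    simpa using hcover hx
  simp only [dif_pos hx']
  obtain ⟨ha, hball⟩ := hx'.choose_spec
  refine ⟨htfin.mem_toFinset.2 ha, ?_⟩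
  have := Metric.mem_ball.1 hball
  rw [dist_eq_norm] at this
  exact this.le

def myNetData (C : Set X) (ε : ℝ) : Finset X × (X → X) :=
  if h : IsCompact C ∧ C.Nonempty ∧ 0 < ε then
    ⟨(my_exists_net h.1 h.2.1 h.2.2).choose, (my_exists_net h.1 h.2.1 h.2.2).choose_spec.choose⟩
  else ⟨∅, fun _ => 0⟩

lemma myNetData_spec {C : Set X} (hC : IsCompact C) (hne : C.Nonempty) {ε : ℝ} (hε : 0 < ε) :
    (∀ a ∈ (myNetData C ε).1, a ∈ C) ∧
      ∀ x ∈ C, (myNetData C ε).2 x ∈ (myNetData C ε).1 ∧ ‖x - (myNetData C ε).2 x‖ ≤ ε := by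
  have h : IsCompact C ∧ C.Nonempty ∧ 0 < ε := ⟨hC, hne, hε⟩
  simp only [myNetData, dif_pos h]
  exact (my_exists_net h.1 h.2.1 h.2.2).choose_spec.choose_spec

def myIterC (C : Set X) (R : ℝ) : ℕ → Set X
  | 0 => C
  | n+1 =>
    (⋃ a ∈ (myNetData (myIterC C R n) (R / 4 ^ (n + 1))).1, (fun x => x - a) '' myIterC C R n)
      ∩ Metric.closedBall 0 (R / 4 ^ (n + 1))

def myRemF (C : Set X) (R : ℝ) : ℕ → X → X
  | 0 => fun x => x
  | n+1 => fun x =>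
      myRemF C R n x - (myNetData (myIterC C R n) (R / 4 ^ (n + 1))).2 (myRemF C R n x)

lemma myIterC_spec {C : Set X} (hC : IsCompact C) (hne : C.Nonempty) {R : ℝ} (hR : 0 < R)
    (hbound : ∀ x ∈ C, ‖x‖ ≤ R) : ∀ n, IsCompact (myIterC C R n) ∧ (myIterC C R n).Nonempty ∧
      ∀ x ∈ myIterC C R n, ‖x‖ ≤ R / 4 ^ n := by
  intro n
  induction n with
  | zero => exact ⟨hC, hne, by simpa [myIterC] using hbound⟩
  | succ n ih =>
    obtain ⟨hcomp, hnonempty, _⟩ := ih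
    have hε : (0:ℝ) < R / 4 ^ (n+1) := by positivity
    obtain ⟨hsub, hf⟩ := myNetData_spec hcomp hnonempty hε
    refine ⟨?_, ?_, ?_⟩
    · show IsCompact (myIterC C R (n+1))
      rw [myIterC]
      refine IsCompact.inter_right ?_ Metric.isClosed_closedBall
      exact (myNetData (myIterC C R n) (R / 4 ^ (n + 1))).1.isCompact_biUnion
        (fun a _ => hcomp.image (continuous_id.sub continuous_const))
    · obtain ⟨x₀, hx₀⟩ := hnonempty
      refine ⟨x₀ - (myNetData (myIterC C R n) (R / 4 ^ (n + 1))).2 x₀, ?_⟩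
      rw [myIterC]
      refine ⟨Set.mem_biUnion (hf x₀ hx₀).1 ⟨x₀, hx₀, rfl⟩, ?_⟩
      rw [Metric.mem_closedBall, dist_zero_right]
      exact (hf x₀ hx₀).2
    · intro x hx
      rw [myIterC] at hx
      have := hx.2
      rwa [Metric.mem_closedBall, dist_zero_right] at this

lemma myRemF_mem {C : Set X} (hC : IsCompact C) (hne : C.Nonempty) {R : ℝ} (hR : 0 < R)
    (hbound : ∀ x ∈ C, ‖x‖ ≤ R) : ∀ n, ∀ x ∈ C, myRemF C R n x ∈ myIterC C R n := by
  intro n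
  induction n with
  | zero => intro x hx; exact hx
  | succ n ih =>
    intro x hx
    have hmem := ih x hx
    obtain ⟨hcomp, hnonempty, _⟩ := myIterC_spec hC hne hR hbound n
    have hε : (0:ℝ) < R / 4 ^ (n+1) := by positivity
    obtain ⟨hsub, hf⟩ := myNetData_spec hcomp hnonempty hε
    rw [myRemF, myIterC]
    refine ⟨Set.mem_biUnion (hf _ hmem).1 ⟨_, hmem, rfl⟩, ?_⟩
    rw [Metric.mem_closedBall, dist_zero_right]
    exact (hf _ hmem).2

lemma myRemF_eq (C : Set X) (R : ℝ) : ∀ n, ∀ x : X,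
    x - ∑ k ∈ Finset.range n,
      (myNetData (myIterC C R k) (R / 4 ^ (k + 1))).2 (myRemF C R k x) = myRemF C R n x := by
  intro n
  induction n with
  | zero => intro x; simp [myRemF]
  | succ n ih =>
    intro x
    have hr : myRemF C R (n+1) x = myRemF C R n x -
        (myNetData (myIterC C R n) (R / 4 ^ (n + 1))).2 (myRemF C R n x) := rfl
    rw [Finset.sum_range_succ, hr, ← ih x]
    abel

end GrothAux

open scoped Classical in
set_option maxHeartbeats 1000000 in
/-- Grothendieck's compactness criterion: `K` is relatively compact iff it is contained in
the closed absolutely convex hull `{Σ aₙ • xₙ : Σ |aₙ| ≤ 1}` of a null sequence `(xₙ)`. -/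
theorem grothendieck_compactness [CompleteSpace X] (K : Set X) :
    IsCompact (closure K) ↔ ∃ x : ℕ → X, Tendsto x atTop (nhds 0) ∧
      K ⊆ {y | ∃ a : ℕ → ℝ, Summable (fun n => |a n|) ∧ (∑' n, |a n|) ≤ 1 ∧
        HasSum (fun n => a n • x n) y} := by
  constructor
  · intro h
    rcases K.eq_empty_or_nonempty with rfl | hKne
    · exact ⟨fun _ => 0, tendsto_const_nhds, by simp⟩
    set C := closure K with hCdef
    have hCc : IsCompact C := h
    have hCne : C.Nonempty := hKne.closure
    obtain ⟨R₀, hR₀⟩ := hCc.isBounded.exists_norm_le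
    set R : ℝ := max R₀ 1 with hRdef
    have hR : (0:ℝ) < R := lt_of_lt_of_le one_pos (le_max_right _ _)
    have hbound : ∀ x ∈ C, ‖x‖ ≤ R := fun x hx => (hR₀ x hx).trans (le_max_left _ _)
    set A : ℕ → Finset X := fun n => (myNetData (myIterC C R n) (R / 4 ^ (n + 1))).1 with hAdef
    set g : ℕ → X → X := fun n x =>
      (myNetData (myIterC C R n) (R / 4 ^ (n + 1))).2 (myRemF C R n x) with hgdef
    have hspec := fun n => myIterC_spec hCc hCne hR hbound n
    have hnet := fun n => myNetData_spec (hspec n).1 (hspec n).2.1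
      (show (0:ℝ) < R / 4 ^ (n+1) by positivity)
    have hAbd : ∀ n, ∀ a ∈ A n, ‖a‖ ≤ R / 4 ^ n := fun n a ha =>
      (hspec n).2.2 a ((hnet n).1 a ha)
    have hgA : ∀ x ∈ C, ∀ n, g n x ∈ A n := fun x hx n =>
      ((hnet n).2 _ (myRemF_mem hCc hCne hR hbound n x hx)).1
    have hrem : ∀ x ∈ C, ∀ n, ‖x - ∑ k ∈ Finset.range n, g k x‖ ≤ R / 4 ^ n := by
      intro x hx n
      rw [hgdef]
      rw [myRemF_eq C R n x]
      exact (hspec n).2.2 _ (myRemF_mem hCc hCne hR hbound n x hx)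
    set pick : ℕ → ℕ → X := fun n i =>
      if h : i < (A n).toList.length then (A n).toList.get ⟨i, h⟩ else 0 with hpickdef
    have hpick_mem : ∀ n i, i < (A n).toList.length → pick n i ∈ A n := by
      intro n i h
      rw [hpickdef]; simp only [dif_pos h]
      exact Finset.mem_toList.1 (List.get_mem _ _)
    set z : ℕ → X := fun m =>
      (2:ℝ) ^ ((Nat.unpair m).1 + 1) • pick (Nat.unpair m).1 (Nat.unpair m).2 with hzdef
    have hznull : Tendsto z atTop (nhds 0) := by
      rw [← Nat.cofinite_eq_atTop, Metric.tendsto_nhds]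
      intro ε hε
      rw [eventually_cofinite]
      have htend : Tendsto (fun n : ℕ => 2 * R * (1/2:ℝ) ^ n) atTop (𝓝 0) := by
        simpa using
          (tendsto_pow_atTop_nhds_zero_of_lt_one (by norm_num : (0:ℝ) ≤ 1/2)
            (by norm_num : (1/2:ℝ) < 1)).const_mul (2*R)
      obtain ⟨N, hN⟩ := Metric.tendsto_atTop.1 htend ε hε
      set M := (Finset.range N).sup (fun n => (A n).toList.length) with hM
      apply Set.Finite.subset (((Finset.range N) ×ˢ (Finset.range M)).finite_toSet.image
        (fun p : ℕ × ℕ => Nat.pair p.1 p.2))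
      intro m hm
      simp only [Set.mem_setOf_eq] at hm
      have hi : (Nat.unpair m).2 < (A (Nat.unpair m).1).toList.length := by
        by_contra hcon
        apply hm
        rw [hzdef]; simp only
        rw [hpickdef]; simp only [dif_neg hcon]
        simpa using hε
      have hnorm : ‖z m‖ ≤ 2 * R * (1/2:ℝ) ^ (Nat.unpair m).1 := by
        rw [hzdef]; simp only [norm_smul]
        have h1 : ‖pick (Nat.unpair m).1 (Nat.unpair m).2‖ ≤ R / 4 ^ (Nat.unpair m).1 :=
          hAbd _ _ (hpick_mem _ _ hi)
        have h2 : ‖(2:ℝ) ^ ((Nat.unpair m).1 + 1)‖ = 2 ^ ((Nat.unpair m).1 + 1) := by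
          rw [Real.norm_eq_abs, abs_of_nonneg]; positivity
        rw [h2]
        calc (2:ℝ) ^ ((Nat.unpair m).1 + 1) * ‖pick (Nat.unpair m).1 (Nat.unpair m).2‖
            ≤ 2 ^ ((Nat.unpair m).1 + 1) * (R / 4 ^ (Nat.unpair m).1) := by
              apply mul_le_mul_of_nonneg_left h1; positivity
          _ = 2 * R * (1/2:ℝ) ^ (Nat.unpair m).1 := by
              have h4 : (4:ℝ) ^ (Nat.unpair m).1 = 2 ^ (Nat.unpair m).1 * 2 ^ (Nat.unpair m).1 := by
                rw [← mul_pow]; norm_num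
              rw [one_div, inv_pow, h4, pow_succ]
              have h2' : (2:ℝ) ^ (Nat.unpair m).1 ≠ 0 := by positivity
              field_simp
      have hn : (Nat.unpair m).1 < N := by
        by_contra hcon
        push_neg at hcon
        have h3 := hN _ hcon
        rw [Real.dist_eq, sub_zero, abs_of_nonneg (by positivity)] at h3
        apply hm
        rw [dist_zero_right]
        exact lt_of_le_of_lt hnorm h3
      refine ⟨((Nat.unpair m).1, (Nat.unpair m).2), ?_, Nat.pair_unpair m⟩
      simp only [Finset.coe_product, Set.mem_prod, Finset.mem_coe, Finset.mem_range]
      exact ⟨hn, lt_of_lt_of_le hi (Finset.le_sup (f := fun n => (A n).toList.length) (Finset.mem_range.2 hn))⟩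
    refine ⟨z, hznull, ?_⟩
    intro y hy
    have hyC : y ∈ C := subset_closure hy
    set idx : ℕ → ℕ := fun n => (A n).toList.idxOf (g n y) with hidxdef
    have hidx : ∀ n, idx n < (A n).toList.length := fun n =>
      List.idxOf_lt_length_iff.2 (Finset.mem_toList.2 (hgA y hyC n))
    have hpick_idx : ∀ n, pick n (idx n) = g n y := by
      intro n
      rw [hpickdef]; simp only [dif_pos (hidx n)]
      exact List.idxOf_get (hidx n)
    set a : ℕ → ℝ := fun m =>
      if (Nat.unpair m).2 = idx (Nat.unpair m).1 then (1/2:ℝ) ^ ((Nat.unpair m).1 + 1) else 0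
      with hadef
    set j : ℕ → ℕ := fun n => Nat.pair n (idx n) with hjdef
    have hj_inj : Function.Injective j := by
      intro m n hmn
      have := congrArg (fun k => (Nat.unpair k).1) hmn
      simpa [hjdef, Nat.unpair_pair] using this
    have hj_range : ∀ m, m ∉ Set.range j → a m = 0 := by
      intro m hm
      rw [hadef]
      simp only
      rw [if_neg]
      intro hcon
      exact hm ⟨(Nat.unpair m).1, by rw [hjdef]; simp only; rw [← hcon, Nat.pair_unpair]⟩
    have haj : ∀ n, a (j n) = (1/2:ℝ) ^ (n + 1) := by
      intro n; rw [hadef, hjdef]; simp [Nat.unpair_pair]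
    have h2 : HasSum (fun n : ℕ => (1/2:ℝ) ^ (n + 1)) 1 := by
      have h21 := (hasSum_geometric_of_lt_one (by norm_num : (0:ℝ) ≤ 1/2)
        (by norm_num : (1/2:ℝ) < 1)).mul_left (1/2:ℝ)
      norm_num at h21
      have e : (fun n : ℕ => (1/2:ℝ) ^ (n + 1)) = fun i => 1/2 * (1/2:ℝ) ^ i := by
        funext n
        rw [pow_succ]
        ring
      rw [e]; exact h21
    have habs : HasSum (fun m => |a m|) 1 := by
      refine (hj_inj.hasSum_iff ?_).1 ?_
      · intro m hm; rw [hj_range m hm, abs_zero]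
      · show HasSum (fun n => |a (j n)|) 1
        convert h2 using 2 with n
        rw [haj n, abs_of_nonneg (by positivity)]
    have hgnorm : ∀ n, ‖g n y‖ ≤ R * (1/4:ℝ) ^ n := by
      intro n
      have := hAbd n _ (hgA y hyC n)
      calc ‖g n y‖ ≤ R / 4 ^ n := this
        _ = R * (1/4:ℝ) ^ n := by rw [div_eq_mul_inv, one_div, inv_pow]
    have hsumgeom : Summable (fun n : ℕ => R * (1/4:ℝ) ^ n) :=
      (summable_geometric_of_lt_one (by norm_num) (by norm_num)).mul_left R
    have hsummg : Summable (fun n => ‖g n y‖) :=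
      Summable.of_nonneg_of_le (fun n => norm_nonneg _) hgnorm hsumgeom
    have hgsum : HasSum (fun n => g n y) y := by
      rw [hasSum_iff_tendsto_nat_of_summable_norm hsummg]
      rw [tendsto_iff_dist_tendsto_zero]
      apply squeeze_zero (fun n => dist_nonneg) (g := fun n => R * (1/4:ℝ) ^ n)
      · intro n
        rw [dist_eq_norm, ← norm_neg]
        simp only [neg_sub]
        calc ‖y - ∑ i ∈ Finset.range n, g i y‖ ≤ R / 4 ^ n := hrem y hyC n
          _ = R * (1/4:ℝ) ^ n := by rw [div_eq_mul_inv, one_div, inv_pow]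
      · simpa using (tendsto_pow_atTop_nhds_zero_of_lt_one
          (by norm_num : (0:ℝ) ≤ 1/4) (by norm_num : (1/4:ℝ) < 1)).const_mul R
    have hsz : HasSum (fun m => a m • z m) y := by
      refine (hj_inj.hasSum_iff ?_).1 ?_
      · intro m hm; rw [hj_range m hm, zero_smul]
      · show HasSum (fun n => a (j n) • z (j n)) y
        convert hgsum using 2 with n
        rw [haj n, hzdef]
        simp only [hjdef, Nat.unpair_pair]
        rw [hpick_idx n, smul_smul, ← mul_pow]
        norm_num
    exact ⟨a, habs.summable, le_of_eq habs.tsum_eq, hsz⟩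
  · rintro ⟨x, hx0, hK⟩
    set S := {y | ∃ a : ℕ → ℝ, Summable (fun n => |a n|) ∧ (∑' n, |a n|) ≤ 1 ∧
          HasSum (fun n => a n • x n) y} with hSdef
    have hTB : TotallyBounded S := by
      rw [Metric.totallyBounded_iff]
      intro ε hε
      obtain ⟨N, hN⟩ : ∃ N, ∀ n ≥ N, ‖x n‖ < ε / 4 := by
        have := Metric.tendsto_atTop.1 hx0 (ε / 4) (by positivity)
        simpa [dist_zero_right] using this
      set φ : (Fin N → ℝ) → X := fun a => ∑ i, a i • x i with hφdef
      have hφcont : Continuous φ :=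
        continuous_finset_sum _ fun i _ => (continuous_apply i).smul continuous_const
      set B : Set (Fin N → ℝ) := {a | ∑ i, |a i| ≤ 1} with hBdef
      have hBclosed : IsClosed B :=
        isClosed_le (continuous_finset_sum _ fun i _ => (continuous_apply i).abs) continuous_const
      have hBsub : B ⊆ Metric.closedBall 0 1 := by
        intro a ha
        rw [Metric.mem_closedBall, dist_zero_right]
        rw [pi_norm_le_iff_of_nonneg zero_le_one]
        intro i
        rw [Real.norm_eq_abs]
        exact le_trans (Finset.single_le_sum (f := fun i => |a i|)
          (fun _ _ => abs_nonneg _) (Finset.mem_univ i)) ha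
      have hBcomp : IsCompact B :=
        (isCompact_closedBall (0 : Fin N → ℝ) 1).of_isClosed_subset hBclosed hBsub
      have hCcomp : IsCompact (φ '' B) := hBcomp.image hφcont
      obtain ⟨t, htfin, hcover⟩ :=
        Metric.totallyBounded_iff.1 hCcomp.totallyBounded (ε / 2) (by positivity)
      refine ⟨t, htfin, ?_⟩
      rintro y ⟨a, hsum, hle, hy⟩
      have hmemB : (fun i : Fin N => a i) ∈ B := by
        show ∑ i : Fin N, |a (i : ℕ)| ≤ 1
        calc ∑ i : Fin N, |a (i : ℕ)| = ∑ n ∈ Finset.range N, |a n| :=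
              Fin.sum_univ_eq_sum_range (fun n => |a n|) N
          _ ≤ ∑' n, |a n| := Summable.sum_le_tsum _ (fun _ _ => abs_nonneg _) hsum
          _ ≤ 1 := hle
      have hy₀mem : φ (fun i => a i) ∈ φ '' B := ⟨_, hmemB, rfl⟩
      obtain ⟨c, hc, hyc⟩ := Set.mem_iUnion₂.1 (hcover hy₀mem)
      refine Set.mem_iUnion₂.2 ⟨c, hc, ?_⟩
      -- tail estimate
      have hshift : Summable (fun n => |a (n + N)|) := (summable_nat_add_iff N).2 hsum
      have htail : HasSum (fun n => a (n + N) • x (n + N))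
          (y - ∑ i ∈ Finset.range N, a i • x i) := by
        exact (hasSum_nat_add_iff' N).2 hy
      have hT1 : (∑' n, |a (n + N)|) ≤ 1 := by
        refine le_trans ?_ hle
        exact Summable.tsum_le_tsum_of_inj (fun n => n + N) (add_left_injective N)
          (fun c _ => abs_nonneg _) (fun n => le_rfl) hshift hsum
      have hbdd : ∀ n, ‖a (n + N) • x (n + N)‖ ≤ ε / 4 * |a (n + N)| := by
        intro n
        rw [norm_smul, Real.norm_eq_abs, mul_comm]
        exact mul_le_mul_of_nonneg_right (hN _ (Nat.le_add_left N n)).le (abs_nonneg _)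
      have hgsum : HasSum (fun n => ε / 4 * |a (n + N)|) (ε / 4 * ∑' n, |a (n + N)|) :=
        hshift.hasSum.mul_left _
      have hnorm : ‖y - ∑ i ∈ Finset.range N, a i • x i‖ ≤ ε / 4 * ∑' n, |a (n + N)| := by
        rw [← htail.tsum_eq]
        exact tsum_of_norm_bounded hgsum hbdd
      have hy₀eq : φ (fun i => a i) = ∑ i ∈ Finset.range N, a i • x i :=
        Fin.sum_univ_eq_sum_range (fun n => a n • x n) N
      rw [Metric.mem_ball]
      calc dist y c ≤ dist y (φ fun i => a i) + dist (φ fun i => a i) c := dist_triangle _ _ _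
        _ < ε / 4 * 1 + ε / 2 := by
            refine add_lt_add_of_le_of_lt ?_ (Metric.mem_ball.1 hyc)
            rw [dist_eq_norm, hy₀eq, mul_one]
            refine le_trans hnorm ?_
            have h4 : (0:ℝ) ≤ ε / 4 := by positivity
            nlinarith [hT1, h4]
        _ ≤ ε := by linarith
    have h1 : TotallyBounded (closure K) :=
      TotallyBounded.subset (closure_mono hK) hTB.closure
    exact TotallyBounded.isCompact_of_isClosed h1 isClosed_closure
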